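/- Fix s>0, N∈ℕ and c∈ℝ^N with |c_i|<1 for all i. Then the un-nested integral ∫_0^1 dt_1 ⋯ ∫_0^1 dt_N ∏_{i=1}^{N} t_i^{2s(N−i+1)−1}(1−t_i)^{2s−1}(1−c_i ∏_{j=1}^{i} t_j)^{−2s} equals the nested integral ∫_0^1 du_1 ∫_{u_1}^1 du_2 ⋯ ∫_{u_{N−1}}^1 du_N ∏_{i=1}^{N+1}(u_i−u_{i−1})^{2s−1} ∏_{i=1}^{N}(1−c_i(1−u_i))^{−2s}, with the conventions u_0=0 and u_{N+1}=1. -/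

import Mathlib

/-- The ordered simplex `{θ : ρ_l ≤ θ_1 ≤ θ_2 ≤ … ≤ θ_N ≤ ρ_r}`, the region of the nested
integral `∫_{ρ_l}^{ρ_r}dθ_1 ∫_{θ_1}^{ρ_r}dθ_2 ⋯ ∫_{θ_{N−1}}^{ρ_r}dθ_N`. -/
def simplexSet (N : ℕ) (ρl ρr : ℝ) : Set (Fin N → ℝ) :=
  {θ | (∀ i j : Fin N, i ≤ j → θ i ≤ θ j) ∧ ∀ i, ρl ≤ θ i ∧ θ i ≤ ρr}

/-- The extended chain `(θ_0, θ_1, …, θ_N, θ_{N+1})` with the conventions `θ_0 = ρ_l`,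
`θ_{N+1} = ρ_r`. -/
noncomputable def chainExt (ρl ρr : ℝ) {N : ℕ} (θ : Fin N → ℝ) : Fin (N + 2) → ℝ :=
  Fin.snoc (Fin.cons ρl θ) ρr

/-- The product of the consecutive gaps: `∏_{i=1}^{N+1} (θ_i − θ_{i−1})^{2s−1}` with the
conventions `θ_0 = ρ_l`, `θ_{N+1} = ρ_r`. -/
noncomputable def gapProd (s ρl ρr : ℝ) {N : ℕ} (θ : Fin N → ℝ) : ℝ :=
  ∏ i : Fin (N + 1),
    (chainExt ρl ρr θ i.succ - chainExt ρl ρr θ i.castSucc) ^ (2 * s - 1)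

namespace UNestAux

open MeasureTheory Finset

variable {N : ℕ}

/-- The change of variables `u i = 1 - ∏_{j ≤ i} t j`. -/
def Phi (N : ℕ) (t : Fin N → ℝ) : Fin N → ℝ := fun i => 1 - ∏ j ∈ Finset.Iic i, t j

/-- The open unit cube. -/
def cube (N : ℕ) : Set (Fin N → ℝ) := Set.univ.pi fun _ => Set.Ioo (0:ℝ) 1

/-- The open simplex. -/
def Sopen (N : ℕ) : Set (Fin N → ℝ) :=
  {u | (∀ i j : Fin N, i < j → u i < u j) ∧ ∀ i, 0 < u i ∧ u i < 1}

/-- The derivative of `Phi`. -/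
noncomputable def DPhi (N : ℕ) (t : Fin N → ℝ) : (Fin N → ℝ) →L[ℝ] (Fin N → ℝ) :=
  ContinuousLinearMap.pi fun i =>
    - ∑ j ∈ Finset.Iic i, (∏ k ∈ (Finset.Iic i).erase j, t k) • ContinuousLinearMap.proj j

lemma hasFDerivAt_Phi (t : Fin N → ℝ) : HasFDerivAt (Phi N) (DPhi N t) t := by
  apply hasFDerivAt_pi.2
  intro i
  have h := (hasFDerivAt_finset_prod (u := Finset.Iic i) (x := t) (𝕜 := ℝ))
  simpa [Phi, Pi.sub_def] using (hasFDerivAt_const (1:ℝ) t).sub h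

lemma det_DPhi (t : Fin N → ℝ) :
    (DPhi N t).det = (-1) ^ N * ∏ i : Fin N, ∏ k ∈ Finset.Iio i, t k := by
  have hM : LinearMap.toMatrix (Pi.basisFun ℝ (Fin N)) (Pi.basisFun ℝ (Fin N))
      ((DPhi N t) : (Fin N → ℝ) →ₗ[ℝ] (Fin N → ℝ)) = Matrix.of fun i j =>
        - if j ≤ i then ∏ k ∈ (Finset.Iic i).erase j, t k else 0 := by
    ext i j
    rw [LinearMap.toMatrix_apply]
    simp [DPhi, ContinuousLinearMap.pi_apply, Pi.basisFun_apply, Pi.basisFun_repr,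
      Pi.single_apply, Finset.sum_apply, mul_ite, Finset.sum_ite_eq', Finset.mem_Iic]
  have hdet : (DPhi N t).det = (Matrix.of fun i j =>
      - if j ≤ i then ∏ k ∈ (Finset.Iic i).erase j, t k else 0 : Matrix (Fin N) (Fin N) ℝ).det := by
    rw [ContinuousLinearMap.det, ← LinearMap.det_toMatrix (Pi.basisFun ℝ (Fin N)), hM]
  rw [hdet, Matrix.det_of_lowerTriangular]
  · simp only [Matrix.of_apply, le_refl, if_true, Finset.Iic_erase]
    have h1 : ∀ x : Fin N, -∏ k ∈ Finset.Iio x, t k = (-1) * ∏ k ∈ Finset.Iio x, t k :=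
      fun x => by ring
    rw [Finset.prod_congr rfl fun x _ => h1 x, Finset.prod_mul_distrib, Finset.prod_const]
    simp
  · intro i j hij
    have hij' : i < j := by simpa using hij
    simp only [Matrix.of_apply, if_neg (not_le.2 hij'), neg_zero]

lemma Phi_injOn : Set.InjOn (Phi N) (cube N) := by
  intro t ht t' ht' h
  have ht0 : ∀ i, 0 < t i := fun i => (ht i (Set.mem_univ i)).1
  have hP : ∀ i : Fin N, ∏ j ∈ Finset.Iic i, t j = ∏ j ∈ Finset.Iic i, t' j := by
    intro i
    have := congrFun h i
    simpa [Phi, sub_right_inj] using this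
  have key : ∀ n : ℕ, ∀ i : Fin N, (i : ℕ) = n → t i = t' i := by
    intro n
    induction n using Nat.strong_induction_on with
    | _ n IH =>
      intro i hi
      have hIio : ∏ j ∈ Finset.Iio i, t j = ∏ j ∈ Finset.Iio i, t' j :=
        Finset.prod_congr rfl fun j hj => by
          have hj2 : j < i := Finset.mem_Iio.1 hj
          exact IH j (by rw [← hi]; exact hj2) j rfl
      have h1 : t i * ∏ j ∈ Finset.Iio i, t j = t' i * ∏ j ∈ Finset.Iio i, t' j := by
        have h2 := hP i
        rwa [← Finset.Iio_insert i, Finset.prod_insert (by simp),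
          Finset.prod_insert (by simp)] at h2
      have hpos : 0 < ∏ j ∈ Finset.Iio i, t j := Finset.prod_pos fun j _ => ht0 j
      rw [← hIio] at h1
      exact mul_right_cancel₀ (ne_of_gt hpos) h1
  funext i
  exact key i i rfl

lemma prod_Iic_pos {t : Fin N → ℝ} (ht : t ∈ cube N) (i : Fin N) :
    0 < ∏ j ∈ Finset.Iic i, t j :=
  Finset.prod_pos fun j _ => (ht j (Set.mem_univ j)).1

lemma prod_Iic_le_one {t : Fin N → ℝ} (ht : t ∈ cube N) (i : Fin N) :
    ∏ j ∈ Finset.Iic i, t j ≤ 1 :=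
  Finset.prod_le_one (fun j _ => le_of_lt (ht j (Set.mem_univ j)).1)
    (fun j _ => le_of_lt (ht j (Set.mem_univ j)).2)

lemma Phi_image_subset : Phi N '' cube N ⊆ simplexSet N 0 1 := by
  rintro _ ⟨t, ht, rfl⟩
  constructor
  · intro i j hij
    have hsub : Finset.Iic i ⊆ Finset.Iic j := Finset.Iic_subset_Iic.2 hij
    have hsd := Finset.prod_sdiff (f := t) hsub
    have hle : ∏ k ∈ Finset.Iic j \ Finset.Iic i, t k ≤ 1 :=
      Finset.prod_le_one (fun k _ => le_of_lt (ht k (Set.mem_univ k)).1)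
        (fun k _ => le_of_lt (ht k (Set.mem_univ k)).2)
    have : ∏ k ∈ Finset.Iic j, t k ≤ ∏ k ∈ Finset.Iic i, t k := by
      rw [← hsd]
      calc (∏ k ∈ Finset.Iic j \ Finset.Iic i, t k) * ∏ k ∈ Finset.Iic i, t k
          ≤ 1 * ∏ k ∈ Finset.Iic i, t k := by
            apply mul_le_mul_of_nonneg_right hle (le_of_lt (prod_Iic_pos ht i))
        _ = _ := one_mul _
    simp only [Phi]
    linarith
  · intro i
    have h1 := prod_Iic_pos ht i
    have h2 := prod_Iic_le_one ht i
    constructor <;> simp only [Phi] <;> linarith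

/-- The value of the previous coordinate (`0` for the first coordinate). -/
noncomputable def prev (u : Fin N → ℝ) (i : Fin N) : ℝ :=
  if h : (i : ℕ) = 0 then 0 else u ⟨(i : ℕ) - 1, by have := i.isLt; omega⟩

lemma Sopen_subset_image : Sopen N ⊆ Phi N '' cube N := by
  rintro u ⟨hmono, hbd⟩
  set t : Fin N → ℝ := fun i => (1 - u i) / (1 - prev u i) with hT
  have hprev_lt : ∀ i, prev u i < u i := by
    intro i
    by_cases h : (i : ℕ) = 0
    · rw [prev, dif_pos h]; exact (hbd i).1
    · rw [prev, dif_neg h]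
      exact hmono _ i (by simp [Fin.lt_def]; omega)
  have hprev_nonneg : ∀ i, 0 ≤ prev u i := by
    intro i
    by_cases h : (i : ℕ) = 0
    · rw [prev, dif_pos h]
    · rw [prev, dif_neg h]; exact le_of_lt (hbd _).1
  have htmem : ∀ i, t i ∈ Set.Ioo (0:ℝ) 1 := by
    intro i
    have h1 : 0 < 1 - u i := by linarith [(hbd i).2]
    have h2 : 0 < 1 - prev u i := by linarith [hprev_lt i, (hbd i).2]
    constructor
    · exact div_pos h1 h2
    · rw [div_lt_one h2]; linarith [hprev_lt i]
  have htele : ∀ n : ℕ, ∀ i : Fin N, (i : ℕ) = n → ∏ j ∈ Finset.Iic i, t j = 1 - u i := by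
    intro n
    induction n using Nat.strong_induction_on with
    | _ n IH =>
      intro i hi
      rw [← Finset.Iio_insert i, Finset.prod_insert (by simp)]
      by_cases h0 : (i : ℕ) = 0
      · have hIio : Finset.Iio i = ∅ := by
          ext j; simp only [Finset.mem_Iio, Finset.notMem_empty, iff_false, Fin.lt_def, h0]
          omega
        rw [hIio, Finset.prod_empty, mul_one, hT]
        simp only [prev, dif_pos h0]
        ring
      · have hN : (i : ℕ) - 1 < N := by have := i.isLt; omega
        set i' : Fin N := ⟨(i : ℕ) - 1, hN⟩ with hi'
        have hIio : Finset.Iio i = Finset.Iic i' := by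
          ext j; simp only [Finset.mem_Iio, Finset.mem_Iic, Fin.lt_def, Fin.le_def, hi']
          omega
        rw [hIio, IH ((i : ℕ) - 1) (by omega) i' rfl]
        have hu' : 1 - u i' ≠ 0 := by
          have := (hbd i').2; intro hc; linarith
        have hpi : prev u i = u i' := by rw [prev, dif_neg h0]
        rw [hT]
        simp only [hpi]
        field_simp
  refine ⟨t, fun i _ => htmem i, ?_⟩
  funext i
  simp only [Phi, htele (i : ℕ) i rfl]
  ring

lemma null_eval (i : Fin N) (a : ℝ) : volume {u : Fin N → ℝ | u i = a} = 0 := by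
  rw [volume_pi]
  exact Measure.pi_hyperplane (fun _ => (volume : Measure ℝ)) i a

lemma null_eq_coords (i j : Fin N) (hij : i ≠ j) :
    volume {u : Fin N → ℝ | u i = u j} = 0 := by
  have hset : {u : Fin N → ℝ | u i = u j} =
      (LinearMap.ker ((LinearMap.proj i : (Fin N → ℝ) →ₗ[ℝ] ℝ) - LinearMap.proj j) : Set _) := by
    ext u
    simp [LinearMap.mem_ker, sub_eq_zero, eq_comm]
  rw [hset]
  apply Measure.addHaar_submodule
  intro htop
  have hmem : (Pi.single i (1:ℝ)) ∈
      LinearMap.ker ((LinearMap.proj i : (Fin N → ℝ) →ₗ[ℝ] ℝ) - LinearMap.proj j) := by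
    rw [htop]; exact Submodule.mem_top
  rw [LinearMap.mem_ker] at hmem
  simp [Pi.single_eq_same, Pi.single_eq_of_ne hij.symm] at hmem

lemma simplex_diff_null : volume (simplexSet N 0 1 \ Sopen N) = 0 := by
  have hsub : simplexSet N 0 1 \ Sopen N ⊆
      ((⋃ i : Fin N, {u : Fin N → ℝ | u i = 0}) ∪ (⋃ i : Fin N, {u : Fin N → ℝ | u i = 1})) ∪
        ⋃ i : Fin N, ⋃ j : Fin N, ⋃ _ : i ≠ j, {u : Fin N → ℝ | u i = u j} := by
    rintro u ⟨⟨hm, hb⟩, hn⟩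
    by_cases h1 : ∀ i j : Fin N, i < j → u i < u j
    · by_cases h2 : ∀ i : Fin N, 0 < u i
      · by_cases h3 : ∀ i : Fin N, u i < 1
        · exact absurd ⟨h1, fun i => ⟨h2 i, h3 i⟩⟩ hn
        · push_neg at h3
          obtain ⟨i, hi⟩ := h3
          refine Or.inl (Or.inr (Set.mem_iUnion.2 ⟨i, ?_⟩))
          exact le_antisymm (hb i).2 hi
      · push_neg at h2
        obtain ⟨i, hi⟩ := h2
        refine Or.inl (Or.inl (Set.mem_iUnion.2 ⟨i, ?_⟩))
        exact le_antisymm hi (hb i).1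
    · push_neg at h1
      obtain ⟨i, j, hij, hle⟩ := h1
      refine Or.inr (Set.mem_iUnion.2 ⟨i, Set.mem_iUnion.2 ⟨j, Set.mem_iUnion.2 ⟨ne_of_lt hij, ?_⟩⟩⟩)
      exact le_antisymm (hm i j (le_of_lt hij)) hle
  refine measure_mono_null hsub ?_
  refine measure_union_null (measure_union_null ?_ ?_) ?_
  · exact measure_iUnion_null fun i => null_eval i 0
  · exact measure_iUnion_null fun i => null_eval i 1
  · exact measure_iUnion_null fun i => measure_iUnion_null fun j =>
      measure_iUnion_null fun hij => null_eq_coords i j hij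

lemma cube_ae_Icc :
    (Set.univ.pi fun _ : Fin N => Set.Icc (0:ℝ) 1) =ᵐ[volume] cube N := by
  rw [MeasureTheory.ae_eq_set]
  constructor
  · have hsub : (Set.univ.pi fun _ : Fin N => Set.Icc (0:ℝ) 1) \ cube N ⊆
        (⋃ i : Fin N, {u : Fin N → ℝ | u i = 0}) ∪ (⋃ i : Fin N, {u : Fin N → ℝ | u i = 1}) := by
      rintro t ⟨ht, hn⟩
      simp only [cube, Set.mem_pi, Set.mem_univ, forall_true_left, not_forall] at hn
      obtain ⟨i, hi⟩ := hn
      have hIcc := ht i (Set.mem_univ i)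
      simp only [Set.mem_Icc] at hIcc
      simp only [Set.mem_Ioo, not_and_or, not_lt] at hi
      rcases hi with hi | hi
      · exact Or.inl (Set.mem_iUnion.2 ⟨i, le_antisymm hi hIcc.1⟩)
      · exact Or.inr (Set.mem_iUnion.2 ⟨i, le_antisymm hIcc.2 hi⟩)
    exact measure_mono_null hsub
      (measure_union_null (measure_iUnion_null fun i => null_eval i 0)
        (measure_iUnion_null fun i => null_eval i 1))
  · have h2 : cube N \ (Set.univ.pi fun _ : Fin N => Set.Icc (0:ℝ) 1) = ∅ := by
      rw [Set.diff_eq_empty]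
      exact Set.pi_mono fun i _ => Set.Ioo_subset_Icc_self
    rw [h2, measure_empty]

lemma chain_cons (t : Fin N → ℝ) (k : Fin (N + 1)) :
    (Fin.cons (0:ℝ) (Phi N t) : Fin (N + 1) → ℝ) k
      = 1 - ∏ j ∈ Finset.univ.filter (fun j : Fin N => (j : ℕ) < (k : ℕ)), t j := by
  induction k using Fin.cases with
  | zero =>
    rw [Fin.cons_zero]
    have h : Finset.univ.filter (fun j : Fin N => (j : ℕ) < ((0 : Fin (N+1)) : ℕ)) = ∅ := by
      ext j
      simp only [Finset.mem_filter, Finset.mem_univ, true_and, Finset.notMem_empty, iff_false,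
        Fin.val_zero]
      simp
    rw [h, Finset.prod_empty]
    ring
  | succ j =>
    rw [Fin.cons_succ]
    show (1 : ℝ) - ∏ k ∈ Finset.Iic j, t k = _
    congr 1
    apply Finset.prod_congr ?_ (fun _ _ => rfl)
    ext j'
    simp only [Finset.mem_Iic, Finset.mem_filter, Finset.mem_univ, true_and, Fin.le_def,
      Fin.val_succ]
    omega

lemma gapProd_Phi (s : ℝ) (t : Fin N → ℝ) :
    gapProd s 0 1 (Phi N t)
      = (∏ i : Fin N, ((∏ k ∈ Finset.Iio i, t k) * (1 - t i)) ^ (2 * s - 1))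
        * (∏ k, t k) ^ (2 * s - 1) := by
  rw [gapProd, Fin.prod_univ_castSucc]
  congr 1
  · apply Finset.prod_congr rfl
    intro i _
    congr 1
    rw [Fin.succ_castSucc]
    rw [chainExt]
    rw [Fin.snoc_castSucc, Fin.snoc_castSucc]
    rw [chain_cons, chain_cons]
    have h1 : Finset.univ.filter (fun j : Fin N => (j : ℕ) < ((i.succ : Fin (N+1)) : ℕ))
        = Finset.Iic i := by
      ext j'
      simp only [Finset.mem_filter, Finset.mem_univ, true_and, Finset.mem_Iic, Fin.le_def,
        Fin.val_succ]
      omega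
    have h2 : Finset.univ.filter (fun j : Fin N => (j : ℕ) < ((i.castSucc : Fin (N+1)) : ℕ))
        = Finset.Iio i := by
      ext j'
      simp only [Finset.mem_filter, Finset.mem_univ, true_and, Finset.mem_Iio, Fin.lt_def,
        Fin.coe_castSucc]
    rw [h1, h2, ← Finset.Iio_insert i, Finset.prod_insert (by simp)]
    ring
  · congr 1
    rw [chainExt, Fin.succ_last, Fin.snoc_last, Fin.snoc_castSucc, chain_cons]
    have h : Finset.univ.filter (fun j : Fin N => (j : ℕ) < ((Fin.last N : Fin (N+1)) : ℕ))
        = Finset.univ := by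
      ext j'
      simp only [Finset.mem_filter, Finset.mem_univ, true_and, iff_true, Fin.val_last]
      exact j'.isLt
    rw [h]
    ring

lemma key_prod (s : ℝ) (t : Fin N → ℝ) (ht : ∀ i, 0 < t i) :
    (∏ i : Fin N, ∏ k ∈ Finset.Iio i, t k)
        * (∏ i : Fin N, (∏ k ∈ Finset.Iio i, t k) ^ (2 * s - 1))
        * (∏ k, t k) ^ (2 * s - 1)
      = ∏ i : Fin N, t i ^ (2 * s * ((N : ℝ) - (i : ℕ)) - 1) := by
  have hQ : ∀ i : Fin N, 0 < ∏ k ∈ Finset.Iio i, t k :=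
    fun i => Finset.prod_pos fun k _ => ht k
  rw [← Finset.prod_mul_distrib]
  have h1 : ∀ i : Fin N, (∏ k ∈ Finset.Iio i, t k) * (∏ k ∈ Finset.Iio i, t k) ^ (2 * s - 1)
      = ∏ k ∈ Finset.Iio i, t k ^ (2 * s) := by
    intro i
    rw [Real.finset_prod_rpow _ _ (fun k _ => (ht k).le)]
    nth_rewrite 1 [← Real.rpow_one (∏ k ∈ Finset.Iio i, t k)]
    rw [← Real.rpow_add (hQ i)]
    ring_nf
  rw [Finset.prod_congr rfl fun i _ => h1 i]
  rw [Finset.prod_comm' (t' := Finset.univ) (s' := fun k => Finset.Ioi k)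
    (by intro x y; simp [Finset.mem_Iio, Finset.mem_Ioi])]
  rw [← Real.finset_prod_rpow _ _ (fun k _ => (ht k).le)]
  rw [← Finset.prod_mul_distrib]
  apply Finset.prod_congr rfl
  intro k _
  rw [Finset.prod_const, Fin.card_Ioi]
  rw [← Real.rpow_natCast (t k ^ (2 * s)) (N - 1 - (k:ℕ)), ← Real.rpow_mul (ht k).le,
    ← Real.rpow_add (ht k)]
  congr 1
  have hk : (k : ℕ) < N := k.isLt
  have hcast : ((N - 1 - (k : ℕ) : ℕ) : ℝ) = (N : ℝ) - 1 - (k : ℕ) := by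
    rw [Nat.sub_sub, Nat.cast_sub (by omega)]
    push_cast; ring
  rw [hcast]; ring

lemma pointwise (s : ℝ) (c : Fin N → ℝ) (t : Fin N → ℝ) (ht : t ∈ cube N) :
    |(DPhi N t).det| • (gapProd s 0 1 (Phi N t)
        * ∏ i : Fin N, (1 - c i * (1 - Phi N t i)) ^ (-(2 * s)))
      = ∏ i : Fin N,
          (t i ^ (2 * s * ((N : ℝ) - (i : ℕ)) - 1) * (1 - t i) ^ (2 * s - 1)
            * (1 - c i * ∏ j : Fin N, (if j ≤ i then t j else 1)) ^ (-(2 * s))) := by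
  have ht0 : ∀ i, 0 < t i := fun i => (ht i (Set.mem_univ i)).1
  have ht1 : ∀ i, t i < 1 := fun i => (ht i (Set.mem_univ i)).2
  have hQ : ∀ i : Fin N, 0 < ∏ k ∈ Finset.Iio i, t k :=
    fun i => Finset.prod_pos fun k _ => ht0 k
  have hdet : |(DPhi N t).det| = ∏ i : Fin N, ∏ k ∈ Finset.Iio i, t k := by
    rw [det_DPhi, abs_mul, abs_pow, abs_neg, abs_one, one_pow, one_mul,
      abs_of_pos (Finset.prod_pos fun i _ => hQ i)]
  have hite : ∀ i : Fin N,
      (∏ j : Fin N, (if j ≤ i then t j else 1)) = ∏ j ∈ Finset.Iic i, t j := by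
    intro i
    rw [← Finset.prod_filter]
    apply Finset.prod_congr ?_ (fun _ _ => rfl)
    ext j
    simp [Finset.mem_Iic]
  have hC : ∀ i : Fin N, ((1:ℝ) - c i * (1 - Phi N t i)) ^ (-(2 * s))
      = (1 - c i * ∏ j ∈ Finset.Iic i, t j) ^ (-(2 * s)) := by
    intro i
    congr 1
    rw [Phi]
    ring
  have hexp : ∀ i : Fin N, ((∏ k ∈ Finset.Iio i, t k) * (1 - t i)) ^ (2 * s - 1)
      = (∏ k ∈ Finset.Iio i, t k) ^ (2 * s - 1) * (1 - t i) ^ (2 * s - 1) :=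
    fun i => Real.mul_rpow (hQ i).le (by linarith [ht1 i])
  rw [smul_eq_mul, hdet, gapProd_Phi]
  rw [Finset.prod_congr rfl fun i _ => hexp i, Finset.prod_mul_distrib]
  rw [Finset.prod_congr rfl fun i _ => hC i]
  conv_rhs =>
    rw [Finset.prod_mul_distrib, Finset.prod_mul_distrib,
      Finset.prod_congr rfl fun i _ => congrArg (· ^ (-(2 * s)))
        (by rw [hite i] : (1:ℝ) - c i * ∏ j : Fin N, (if j ≤ i then t j else 1)
          = 1 - c i * ∏ j ∈ Finset.Iic i, t j)]
  rw [← key_prod s t ht0]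
  ring

end UNestAux

/-- Equality of the un-nested integral over `[0,1]^N` and the nested integral over the ordered
simplex `0 ≤ u_1 ≤ … ≤ u_N ≤ 1` (with conventions `u_0 = 0`, `u_{N+1} = 1`). -/
theorem unnested_integral_eq_nested_integral (s : ℝ) (hs : 0 < s) (N : ℕ) (c : Fin N → ℝ)
    (hc : ∀ i, |c i| < 1) :
    (∫ t in Set.univ.pi (fun _ : Fin N => Set.Icc (0 : ℝ) 1),
        ∏ i : Fin N,
          (t i ^ (2 * s * ((N : ℝ) - (i : ℕ)) - 1) * (1 - t i) ^ (2 * s - 1)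
            * (1 - c i * ∏ j : Fin N, (if j ≤ i then t j else 1)) ^ (-(2 * s))))
      = ∫ u in simplexSet N 0 1,
          gapProd s 0 1 u * ∏ i : Fin N, (1 - c i * (1 - u i)) ^ (-(2 * s)) := by
  classical
  open MeasureTheory UNestAux in
  have hmeas : MeasurableSet (cube N) := MeasurableSet.univ_pi fun _ => measurableSet_Ioo
  have h1 := setIntegral_congr_set (μ := volume)
    (f := fun t : Fin N → ℝ => ∏ i : Fin N,
      (t i ^ (2 * s * ((N : ℝ) - (i : ℕ)) - 1) * (1 - t i) ^ (2 * s - 1)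
        * (1 - c i * ∏ j : Fin N, (if j ≤ i then t j else 1)) ^ (-(2 * s))))
    (cube_ae_Icc (N := N))
  rw [h1]
  have h2 := integral_image_eq_integral_abs_det_fderiv_smul volume hmeas
    (fun x _ => (hasFDerivAt_Phi x).hasFDerivWithinAt) Phi_injOn
    (fun u : Fin N → ℝ => gapProd s 0 1 u * ∏ i : Fin N, (1 - c i * (1 - u i)) ^ (-(2 * s)))
  have h3 : (∫ u in Phi N '' cube N,
        gapProd s 0 1 u * ∏ i : Fin N, (1 - c i * (1 - u i)) ^ (-(2 * s)))
      = ∫ u in simplexSet N 0 1,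
        gapProd s 0 1 u * ∏ i : Fin N, (1 - c i * (1 - u i)) ^ (-(2 * s)) := by
    apply setIntegral_congr_set
    rw [MeasureTheory.ae_eq_set]
    constructor
    · have hempty : Phi N '' cube N \ simplexSet N 0 1 = ∅ :=
        Set.diff_eq_empty.2 Phi_image_subset
      rw [hempty, measure_empty]
    · exact measure_mono_null
        (Set.diff_subset_diff_right Sopen_subset_image) simplex_diff_null
  rw [← h3, h2]
  exact setIntegral_congr_fun hmeas (fun t ht => (pointwise s c t ht).symm)
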